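/- In ℂ[α,β,γ], let J_3 be the ideal generated by α(α² + β − 8) + 4(αβ + 8α + γ), (β − 8)(α² + β − 8) + (4/3)αγ, and γ(α² + β − 8). Then in the quotient ring ℂ[α,β,γ]/(J_3 + (γ)), the identities α(α² − 16)(α² + 64) = 0 and α(β − 8)(β + 8) = 0 hold. -/
import Mathlib


open MvPolynomial

noncomputable section

abbrev R3 : Type := MvPolynomial (Fin 3) ℂ

def al : R3 := X 0
def be : R3 := X 1
def ga : R3 := X 2

def J3 : Ideal R3 := Ideal.span
  {al * (al ^ 2 + be - 8) + 4 * (al * be + 8 * al + ga),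
   (be - 8) * (al ^ 2 + be - 8) + C ((4 : ℂ) / 3) * (al * ga),
   ga * (al ^ 2 + be - 8)}

lemma hg1mem : al * (al ^ 2 + be - 8) + 4 * (al * be + 8 * al + ga) ∈ J3 :=
  Ideal.subset_span (Or.inl rfl)

lemma hg2mem : (be - 8) * (al ^ 2 + be - 8) + C ((4 : ℂ) / 3) * (al * ga) ∈ J3 :=
  Ideal.subset_span (Or.inr (Or.inl rfl))

lemma hgamem : ga ∈ (Ideal.span {ga} : Ideal R3) := Ideal.subset_span rfl

lemma h12 : (C ((1 : ℂ) / 12) : R3) * 12 = 1 := by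
  rw [← map_ofNat (C : ℂ →+* R3) 12, ← C_mul]
  norm_num

lemma hc43 : (C ((4 : ℂ) / 3) : R3) * 3 = 4 := by
  rw [← map_ofNat (C : ℂ →+* R3) 3, ← map_ofNat (C : ℂ →+* R3) 4, ← C_mul]
  norm_num

theorem stmt11 :
    al * (al ^ 2 - 16) * (al ^ 2 + 64) ∈ J3 + Ideal.span {ga} ∧
    al * (be - 8) * (be + 8) ∈ J3 + Ideal.span {ga} := by
  set g1 : R3 := al * (al ^ 2 + be - 8) + 4 * (al * be + 8 * al + ga) with hg1
  set g2 : R3 := (be - 8) * (al ^ 2 + be - 8) + C ((4 : ℂ) / 3) * (al * ga) with hg2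
  have m1 : g1 ∈ J3 + Ideal.span {ga} := Ideal.mem_sup_left hg1mem
  have m2 : g2 ∈ J3 + Ideal.span {ga} := Ideal.mem_sup_left hg2mem
  have m3 : ga ∈ J3 + Ideal.span {ga} := Ideal.mem_sup_right hgamem
  constructor
  · have key : al * (al ^ 2 - 16) * (al ^ 2 + 64) =
        C ((1 : ℂ) / 12) * ((12 * al ^ 2 + 15 * be - 312) * g1 - 75 * al * g2
          + (52 * al ^ 2 - 60 * be + 1248) * ga) := by
      rw [hg1, hg2]
      linear_combination (-(al * (al ^ 2 - 16) * (al ^ 2 + 64))) * h12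
        + (25 * (C ((1 : ℂ) / 12) : R3) * al ^ 2 * ga) * hc43
    rw [key]
    exact Ideal.mul_mem_left _ _ (Ideal.add_mem _
      (Ideal.sub_mem _ (Ideal.mul_mem_left _ _ m1) (Ideal.mul_mem_left _ _ m2))
      (Ideal.mul_mem_left _ _ m3))
  · have key : al * (be - 8) * (be + 8) =
        C ((1 : ℂ) / 12) * ((3 * be - 24) * g1 - 3 * al * g2
          + (4 * al ^ 2 - 12 * be + 96) * ga) := by
      rw [hg1, hg2]
      linear_combination (-(al * (be - 8) * (be + 8))) * h12
        + ((C ((1 : ℂ) / 12) : R3) * al ^ 2 * ga) * hc43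
    rw [key]
    exact Ideal.mul_mem_left _ _ (Ideal.add_mem _
      (Ideal.sub_mem _ (Ideal.mul_mem_left _ _ m1) (Ideal.mul_mem_left _ _ m2))
      (Ideal.mul_mem_left _ _ m3))
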